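/- arXiv:2205.09101 — 2 statements merged into one kernel-verified Lean document; each statement's English description precedes it below -/
import Mathlib

section
/- Let Ω ⊆ ℝⁿ be bounded open, E ⊆ Ω compact with |E| = 0, ϑ a positive weight on Ω, and let α, β, p be measurable functions on Ω with 0 ≤ α ≤ n, β ≥ 0, 1 < p⁻ ≤ p⁺ < ∞, and ess sup(pβ) ≤ n − ess sup α − p⁺ − 1. Suppose there is r₀ ∈ (0,1) with closure(E_{r₀}) ⊆ Ω and ∫_{E_r} r^{α(x)−n} ϑ(x) dx < ε for all r ∈ (0,r₀]. If u : Ω → [0,∞] satisfies u(x) ≤ C d(x,E)^{−β(x)} for a.e. x ∈ Ω∖E, then for all r ∈ (0,r₀], ∫_{E_r} u(x)^{p(x)} ϑ(x) dx ≤ C' ε r^{p⁺+1}, where C' depends only on C, p, β. -/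
open MeasureTheory Set Metric

/-- under the Minkowski-content smallness and the growth bound
`u ≤ C d(·,E)^{-β}`, one has `∫_{E_r} u^{p} ϑ ≤ C' ε r^{p⁺+1}` for all `r ∈ (0,r₀]`. -/
theorem stmt_6 {n : ℕ} (Ω E : Set (Fin n → ℝ)) (hΩo : IsOpen Ω)
    (hΩb : Bornology.IsBounded Ω) (hE : IsCompact E) (hEΩ : E ⊆ Ω)
    (hEnull : volume E = 0)
    (ϑ α β p u : (Fin n → ℝ) → ℝ)
    (hϑpos : ∀ᵐ x ∂(volume.restrict Ω), 0 < ϑ x)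
    (hαm : Measurable α) (hβm : Measurable β) (hpmeas : Measurable p)
    (hum : Measurable u) (hunn : ∀ x, 0 ≤ u x)
    (hα : ∀ x ∈ Ω, 0 ≤ α x ∧ α x ≤ n) (hβ : ∀ x ∈ Ω, 0 ≤ β x)
    (pm pp αp pβp : ℝ) (hpm1 : 1 < pm) (hpmpp : pm ≤ pp)
    (hpb : ∀ᵐ x ∂(volume.restrict Ω), pm ≤ p x ∧ p x ≤ pp)
    (hαp : ∀ᵐ x ∂(volume.restrict Ω), α x ≤ αp)
    (hpβ : ∀ᵐ x ∂(volume.restrict Ω), p x * β x ≤ pβp)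
    -- exponent condition: ess sup (pβ) ≤ n − ess sup α − p⁺ − 1
    (hexp : pβp ≤ n - αp - pp - 1)
    (r₀ ε : ℝ) (hr₀ : r₀ ∈ Set.Ioo (0:ℝ) 1) (hε : 0 < ε)
    (hcl : closure {x | infDist x E < r₀} ⊆ Ω)
    (hMink : ∀ r ∈ Set.Ioc (0:ℝ) r₀,
      ∫⁻ x in {x | infDist x E < r}, ENNReal.ofReal (r ^ (α x - n) * ϑ x)
        < ENNReal.ofReal ε)
    (C : ℝ) (hC : 0 < C)
    (hgrowth : ∀ᵐ x ∂(volume.restrict (Ω \ E)), u x ≤ C * infDist x E ^ (-(β x))) :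
    ∃ C' > (0:ℝ), ∀ r ∈ Set.Ioc (0:ℝ) r₀,
      ∫⁻ x in {x | infDist x E < r}, ENNReal.ofReal (u x ^ p x * ϑ x)
        ≤ ENNReal.ofReal (C' * ε * r ^ (pp + 1)) := by
  classical
  obtain ⟨hr₀0, hr₀1⟩ := hr₀
  by_cases hΩ0 : volume Ω = 0
  · refine ⟨1, one_pos, fun r hr => ?_⟩
    have hsub : {x | infDist x E < r} ⊆ Ω := fun x hx =>
      hcl (subset_closure (show infDist x E < r₀ from lt_of_lt_of_le hx hr.2))
    have h0 : volume {x | infDist x E < r} = 0 := measure_mono_null hsub hΩ0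
    rw [Measure.restrict_eq_zero.mpr h0, lintegral_zero_measure]
    exact zero_le
  -- nondegenerate case
  have hne : (ae (volume.restrict Ω)).NeBot := by
    rw [ae_neBot, Ne, Measure.restrict_eq_zero]; exact hΩ0
  obtain ⟨x₀, hx₀Ω, ⟨hp1w, hp2w⟩, hx₀α, hx₀pβ⟩ :=
    ((ae_restrict_mem hΩo.measurableSet).and (hpb.and (hαp.and hpβ))).exists
  have hβ0 := hβ x₀ hx₀Ω
  have hα0 := (hα x₀ hx₀Ω).1
  have hpβp0 : 0 ≤ pβp := le_trans (mul_nonneg (by linarith) hβ0) hx₀pβ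
  have hαp0 : 0 ≤ αp := le_trans hα0 hx₀α
  have hppn : pp + 1 ≤ (n:ℝ) - αp - pβp := by linarith
  have hnpos : 0 < n := by
    have h2 : (2:ℝ) < n := by linarith
    exact_mod_cast lt_trans (by norm_num : (0:ℝ) < 2) h2
  haveI : Nonempty (Fin n) := Fin.pos_iff_nonempty.mp hnpos
  have hEne : E.Nonempty := by
    rcases E.eq_empty_or_nonempty with hEe | h
    · exfalso
      have huniv : Ω = univ := by
        apply eq_univ_of_univ_subset
        refine subset_trans ?_ hcl
        intro x _
        apply subset_closure
        simp [hEe, Metric.infDist_empty, hr₀0]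
      obtain ⟨R, hR⟩ := (huniv ▸ hΩb).subset_closedBall 0
      have h2 : dist (fun _ => R + 1 : Fin n → ℝ) 0 ≤ R := hR (mem_univ _)
      rw [show (0 : Fin n → ℝ) = fun _ => (0:ℝ) from rfl, dist_pi_const, Real.dist_eq,
        sub_zero] at h2
      have := le_abs_self (R + 1)
      linarith
    · exact h
  -- constants
  have hmax1 : (1:ℝ) ≤ max C 1 := le_max_right C 1
  have hM0 : 0 < max C 1 ^ pp := Real.rpow_pos_of_pos (lt_of_lt_of_le one_pos hmax1) _
  have hpp1 : (0:ℝ) < pp + 1 := by linarith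
  have hqr0 : 0 < (2:ℝ)⁻¹ ^ (pp + 1) := Real.rpow_pos_of_pos (by norm_num) _
  have hqr1 : (2:ℝ)⁻¹ ^ (pp + 1) < 1 := Real.rpow_lt_one (by norm_num) (by norm_num) hpp1
  have h2β : 0 < (2:ℝ) ^ pβp := Real.rpow_pos_of_pos (by norm_num) _
  refine ⟨max C 1 ^ pp * 2 ^ pβp * (1 - (2:ℝ)⁻¹ ^ (pp + 1))⁻¹, ?_, fun r hr => ?_⟩
  · exact mul_pos (mul_pos hM0 h2β) (inv_pos.mpr (by linarith))
  obtain ⟨hr0, hrr₀⟩ := hr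
  have hr1 : r < 1 := lt_of_le_of_lt hrr₀ hr₀1
  -- dyadic radii
  have hs0 : ∀ j : ℕ, 0 < (2:ℝ)⁻¹ ^ j * r := fun j => mul_pos (pow_pos (by norm_num) j) hr0
  have hsr : ∀ j : ℕ, (2:ℝ)⁻¹ ^ j * r ≤ r := fun j => by
    have h1 : (2:ℝ)⁻¹ ^ j ≤ 1 := pow_le_one₀ (by norm_num) (by norm_num)
    nlinarith
  have hs1 : ∀ j : ℕ, (2:ℝ)⁻¹ ^ j * r < 1 := fun j => lt_of_le_of_lt (hsr j) hr1
  have hsr₀ : ∀ j : ℕ, (2:ℝ)⁻¹ ^ j * r ≤ r₀ := fun j => le_trans (hsr j) hrr₀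
  have hKΩ : ∀ j : ℕ, {x | infDist x E < (2:ℝ)⁻¹ ^ j * r} ⊆ Ω := fun j x hx =>
    hcl (subset_closure (show infDist x E < r₀ from lt_of_lt_of_le hx (hsr₀ j)))
  have hKmeas : ∀ j : ℕ, MeasurableSet {x | infDist x E < (2:ℝ)⁻¹ ^ j * r} :=
    fun j => (isOpen_lt (continuous_infDist_pt E) continuous_const).measurableSet
  -- covering of K 0 \ E by annuli
  have hcover : {x | infDist x E < (2:ℝ)⁻¹ ^ 0 * r} \ E ⊆
      ⋃ j : ℕ, ({x | infDist x E < (2:ℝ)⁻¹ ^ j * r} \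
        {x | infDist x E < (2:ℝ)⁻¹ ^ (j+1) * r}) := by
    rintro x ⟨hx0, hxE⟩
    have hd0 : 0 < infDist x E := (hE.isClosed.notMem_iff_infDist_pos hEne).1 hxE
    have hex : ∃ m : ℕ, ¬ infDist x E < (2:ℝ)⁻¹ ^ m * r := by
      obtain ⟨m, hm⟩ := exists_pow_lt_of_lt_one (div_pos hd0 hr0)
        (by norm_num : (2:ℝ)⁻¹ < 1)
      exact ⟨m, not_lt.mpr (le_of_lt ((lt_div_iff₀ hr0).mp hm))⟩
    have hm₀spec := Nat.find_spec hex
    have hm₀pos : Nat.find hex ≠ 0 := fun h => (h ▸ hm₀spec) hx0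
    refine mem_iUnion.mpr ⟨Nat.find hex - 1, ?_, ?_⟩
    · exact not_not.mp (fun hc => Nat.find_min hex (by omega) hc)
    · have he : Nat.find hex - 1 + 1 = Nat.find hex := Nat.succ_pred_eq_of_ne_zero hm₀pos
      rw [he]
      exact hm₀spec
  -- per-annulus bound
  have key : ∀ j : ℕ,
      ∫⁻ x in {x | infDist x E < (2:ℝ)⁻¹ ^ j * r} \
        {x | infDist x E < (2:ℝ)⁻¹ ^ (j+1) * r}, ENNReal.ofReal (u x ^ p x * ϑ x)
      ≤ ENNReal.ofReal (max C 1 ^ pp * 2 ^ pβp * ε * r ^ (pp+1) *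
          ((2:ℝ)⁻¹ ^ (pp+1)) ^ j) := by
    intro j
    have ht0 : 0 < (2:ℝ)⁻¹ ^ (j+1) * r := hs0 (j+1)
    have ht1 : (2:ℝ)⁻¹ ^ (j+1) * r < 1 := hs1 (j+1)
    have hAsub : {x | infDist x E < (2:ℝ)⁻¹ ^ j * r} \
        {x | infDist x E < (2:ℝ)⁻¹ ^ (j+1) * r} ⊆ Ω \ E := fun x hx =>
      ⟨hKΩ j hx.1, fun hxE => hx.2
        (show infDist x E < (2:ℝ)⁻¹ ^ (j+1) * r by
          rw [infDist_zero_of_mem hxE]; exact ht0)⟩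
    have hsubΩ : {x | infDist x E < (2:ℝ)⁻¹ ^ j * r} \
        {x | infDist x E < (2:ℝ)⁻¹ ^ (j+1) * r} ⊆ Ω := fun x hx => (hAsub hx).1
    have hg' := ae_restrict_of_ae_restrict_of_subset hAsub hgrowth
    have hp' := ae_restrict_of_ae_restrict_of_subset hsubΩ hpb
    have hpβ' := ae_restrict_of_ae_restrict_of_subset hsubΩ hpβ
    have hϑ' := ae_restrict_of_ae_restrict_of_subset hsubΩ hϑpos
    have hmem := ae_restrict_mem (μ := volume) ((hKmeas j).diff (hKmeas (j+1)))
    have hcnn : 0 ≤ max C 1 ^ pp * ((2:ℝ)⁻¹ ^ (j+1) * r) ^ (-pβp) :=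
      mul_nonneg hM0.le (Real.rpow_nonneg ht0.le _)
    have step1 : ∫⁻ x in {x | infDist x E < (2:ℝ)⁻¹ ^ j * r} \
          {x | infDist x E < (2:ℝ)⁻¹ ^ (j+1) * r}, ENNReal.ofReal (u x ^ p x * ϑ x)
        ≤ ENNReal.ofReal (max C 1 ^ pp * ((2:ℝ)⁻¹ ^ (j+1) * r) ^ (-pβp)) *
          ∫⁻ x in {x | infDist x E < (2:ℝ)⁻¹ ^ j * r} \
            {x | infDist x E < (2:ℝ)⁻¹ ^ (j+1) * r}, ENNReal.ofReal (ϑ x) := by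
      rw [← lintegral_const_mul' _ _ ENNReal.ofReal_ne_top]
      refine lintegral_mono_ae ?_
      filter_upwards [hg', hp', hpβ', hϑ', hmem] with x hg hpx hpβx hϑx hxmem
      rw [← ENNReal.ofReal_mul hcnn]
      apply ENNReal.ofReal_le_ofReal
      obtain ⟨hp1x, hp2x⟩ := hpx
      have hβx : 0 ≤ β x := hβ x (hsubΩ hxmem)
      have hd2 : (2:ℝ)⁻¹ ^ (j+1) * r ≤ infDist x E := not_lt.mp hxmem.2
      have hd0 : 0 < infDist x E := lt_of_lt_of_le ht0 hd2
      have hpx0 : 0 < p x := by linarith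
      have hcore : u x ^ p x ≤ max C 1 ^ pp * ((2:ℝ)⁻¹ ^ (j+1) * r) ^ (-pβp) := by
        calc u x ^ p x ≤ (C * infDist x E ^ (-β x)) ^ p x :=
              Real.rpow_le_rpow (hunn x) hg hpx0.le
          _ = C ^ p x * (infDist x E ^ (-β x)) ^ p x :=
              Real.mul_rpow hC.le (Real.rpow_nonneg hd0.le _)
          _ = C ^ p x * infDist x E ^ (-(β x * p x)) := by
              rw [← Real.rpow_mul hd0.le, neg_mul]
          _ ≤ max C 1 ^ pp * ((2:ℝ)⁻¹ ^ (j+1) * r) ^ (-pβp) := by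
              have h1 : C ^ p x ≤ max C 1 ^ pp :=
                le_trans (Real.rpow_le_rpow hC.le (le_max_left C 1) hpx0.le)
                  (Real.rpow_le_rpow_of_exponent_le hmax1 hp2x)
              have h2 : infDist x E ^ (-(β x * p x)) ≤
                  ((2:ℝ)⁻¹ ^ (j+1) * r) ^ (-pβp) := by
                have e1 : infDist x E ^ (-(β x * p x)) ≤
                    ((2:ℝ)⁻¹ ^ (j+1) * r) ^ (-(β x * p x)) := by
                  rw [Real.rpow_neg hd0.le, Real.rpow_neg ht0.le]
                  exact inv_anti₀ (Real.rpow_pos_of_pos ht0 _)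
                    (Real.rpow_le_rpow ht0.le hd2 (mul_nonneg hβx hpx0.le))
                have e2 : ((2:ℝ)⁻¹ ^ (j+1) * r) ^ (-(β x * p x)) ≤
                    ((2:ℝ)⁻¹ ^ (j+1) * r) ^ (-pβp) := by
                  refine Real.rpow_le_rpow_of_exponent_ge ht0 ht1.le (neg_le_neg ?_)
                  rw [mul_comm] at hpβx
                  exact hpβx
                exact e1.trans e2
              exact mul_le_mul h1 h2 (Real.rpow_nonneg hd0.le _) hM0.le
      exact mul_le_mul_of_nonneg_right hcore hϑx.le
    have step3 : ∫⁻ x in {x | infDist x E < (2:ℝ)⁻¹ ^ j * r}, ENNReal.ofReal (ϑ x)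
        ≤ ENNReal.ofReal (((2:ℝ)⁻¹ ^ j * r) ^ ((n:ℝ) - αp)) * ENNReal.ofReal ε := by
      have hα' := ae_restrict_of_ae_restrict_of_subset (hKΩ j) hαp
      have hϑ'' := ae_restrict_of_ae_restrict_of_subset (hKΩ j) hϑpos
      have hbound : ∫⁻ x in {x | infDist x E < (2:ℝ)⁻¹ ^ j * r}, ENNReal.ofReal (ϑ x)
          ≤ ENNReal.ofReal (((2:ℝ)⁻¹ ^ j * r) ^ ((n:ℝ) - αp)) *
            ∫⁻ x in {x | infDist x E < (2:ℝ)⁻¹ ^ j * r},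
              ENNReal.ofReal (((2:ℝ)⁻¹ ^ j * r) ^ (α x - n) * ϑ x) := by
        rw [← lintegral_const_mul' _ _ ENNReal.ofReal_ne_top]
        refine lintegral_mono_ae ?_
        filter_upwards [hα', hϑ''] with x hαx hϑx
        rw [← ENNReal.ofReal_mul (Real.rpow_nonneg (hs0 j).le _)]
        apply ENNReal.ofReal_le_ofReal
        have hkey : ((2:ℝ)⁻¹ ^ j * r) ^ ((n:ℝ) - αp) * ((2:ℝ)⁻¹ ^ j * r) ^ (α x - n)
            = ((2:ℝ)⁻¹ ^ j * r) ^ (α x - αp) := by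
          rw [← Real.rpow_add (hs0 j)]
          ring_nf
        calc ϑ x = 1 * ϑ x := (one_mul _).symm
          _ ≤ ((2:ℝ)⁻¹ ^ j * r) ^ (α x - αp) * ϑ x := by
              refine mul_le_mul_of_nonneg_right ?_ hϑx.le
              exact Real.one_le_rpow_of_pos_of_le_one_of_nonpos (hs0 j) (hs1 j).le
                (by linarith)
          _ = ((2:ℝ)⁻¹ ^ j * r) ^ ((n:ℝ) - αp) *
              (((2:ℝ)⁻¹ ^ j * r) ^ (α x - n) * ϑ x) := by
              rw [← mul_assoc, hkey]
      refine hbound.trans (mul_le_mul_right ?_ _)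
      exact le_of_lt (hMink ((2:ℝ)⁻¹ ^ j * r) ⟨hs0 j, hsr₀ j⟩)
    -- real arithmetic for the combined bound
    have e1 : ((2:ℝ)⁻¹ ^ (j+1) * r) ^ (-pβp)
        = 2 ^ pβp * ((2:ℝ)⁻¹ ^ j * r) ^ (-pβp) := by
      have hts : (2:ℝ)⁻¹ ^ (j+1) * r = 2⁻¹ * ((2:ℝ)⁻¹ ^ j * r) := by ring
      rw [hts, Real.mul_rpow (by norm_num) (hs0 j).le,
        Real.inv_rpow (by norm_num : (0:ℝ) ≤ 2),
        Real.rpow_neg (by norm_num : (0:ℝ) ≤ 2), inv_inv]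
    have e2 : ((2:ℝ)⁻¹ ^ j * r) ^ (-pβp) * ((2:ℝ)⁻¹ ^ j * r) ^ ((n:ℝ) - αp)
        = ((2:ℝ)⁻¹ ^ j * r) ^ ((n:ℝ) - αp - pβp) := by
      rw [← Real.rpow_add (hs0 j)]
      ring_nf
    have e3 : ((2:ℝ)⁻¹ ^ j * r) ^ ((n:ℝ) - αp - pβp) ≤ ((2:ℝ)⁻¹ ^ j * r) ^ (pp+1) :=
      Real.rpow_le_rpow_of_exponent_ge (hs0 j) (hs1 j).le hppn
    have e4 : ((2:ℝ)⁻¹ ^ j * r) ^ (pp+1) = ((2:ℝ)⁻¹ ^ (pp+1)) ^ j * r ^ (pp+1) := by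
      rw [Real.mul_rpow (pow_nonneg (by norm_num) j) hr0.le]
      congr 1
      rw [← Real.rpow_natCast ((2:ℝ)⁻¹) j, ← Real.rpow_mul (by norm_num : (0:ℝ) ≤ 2⁻¹),
        mul_comm, Real.rpow_mul (by norm_num : (0:ℝ) ≤ 2⁻¹), Real.rpow_natCast]
    have hreal : max C 1 ^ pp * ((2:ℝ)⁻¹ ^ (j+1) * r) ^ (-pβp) *
        (((2:ℝ)⁻¹ ^ j * r) ^ ((n:ℝ) - αp) * ε)
        ≤ max C 1 ^ pp * 2 ^ pβp * ε * r ^ (pp+1) * ((2:ℝ)⁻¹ ^ (pp+1)) ^ j := by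
      calc max C 1 ^ pp * ((2:ℝ)⁻¹ ^ (j+1) * r) ^ (-pβp) *
          (((2:ℝ)⁻¹ ^ j * r) ^ ((n:ℝ) - αp) * ε)
          = max C 1 ^ pp * 2 ^ pβp * ε *
            (((2:ℝ)⁻¹ ^ j * r) ^ (-pβp) * ((2:ℝ)⁻¹ ^ j * r) ^ ((n:ℝ) - αp)) := by
            rw [e1]; ring
        _ = max C 1 ^ pp * 2 ^ pβp * ε * ((2:ℝ)⁻¹ ^ j * r) ^ ((n:ℝ) - αp - pβp) := by
            rw [e2]
        _ ≤ max C 1 ^ pp * 2 ^ pβp * ε * ((2:ℝ)⁻¹ ^ j * r) ^ (pp+1) := by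
            refine mul_le_mul_of_nonneg_left e3 ?_
            exact mul_nonneg (mul_nonneg hM0.le h2β.le) hε.le
        _ = max C 1 ^ pp * 2 ^ pβp * ε * r ^ (pp+1) * ((2:ℝ)⁻¹ ^ (pp+1)) ^ j := by
            rw [e4]; ring
    calc ∫⁻ x in {x | infDist x E < (2:ℝ)⁻¹ ^ j * r} \
          {x | infDist x E < (2:ℝ)⁻¹ ^ (j+1) * r}, ENNReal.ofReal (u x ^ p x * ϑ x)
        ≤ ENNReal.ofReal (max C 1 ^ pp * ((2:ℝ)⁻¹ ^ (j+1) * r) ^ (-pβp)) *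
          ∫⁻ x in {x | infDist x E < (2:ℝ)⁻¹ ^ j * r} \
            {x | infDist x E < (2:ℝ)⁻¹ ^ (j+1) * r}, ENNReal.ofReal (ϑ x) := step1
      _ ≤ ENNReal.ofReal (max C 1 ^ pp * ((2:ℝ)⁻¹ ^ (j+1) * r) ^ (-pβp)) *
          (ENNReal.ofReal (((2:ℝ)⁻¹ ^ j * r) ^ ((n:ℝ) - αp)) * ENNReal.ofReal ε) :=
          mul_le_mul_right ((lintegral_mono_set diff_subset).trans step3) _
      _ = ENNReal.ofReal (max C 1 ^ pp * ((2:ℝ)⁻¹ ^ (j+1) * r) ^ (-pβp) *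
          (((2:ℝ)⁻¹ ^ j * r) ^ ((n:ℝ) - αp) * ε)) := by
          rw [ENNReal.ofReal_mul hcnn,
            ENNReal.ofReal_mul (Real.rpow_nonneg (hs0 j).le _)]
      _ ≤ ENNReal.ofReal (max C 1 ^ pp * 2 ^ pβp * ε * r ^ (pp+1) *
          ((2:ℝ)⁻¹ ^ (pp+1)) ^ j) := ENNReal.ofReal_le_ofReal hreal
  -- summation
  have hqnn : ∀ j : ℕ, 0 ≤ max C 1 ^ pp * 2 ^ pβp * ε * r ^ (pp+1) *
      ((2:ℝ)⁻¹ ^ (pp+1)) ^ j := fun j =>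
    mul_nonneg (mul_nonneg (mul_nonneg (mul_nonneg hM0.le h2β.le) hε.le)
      (Real.rpow_nonneg hr0.le _)) (pow_nonneg hqr0.le _)
  have hsum : Summable (fun j : ℕ => max C 1 ^ pp * 2 ^ pβp * ε * r ^ (pp+1) *
      ((2:ℝ)⁻¹ ^ (pp+1)) ^ j) :=
    (summable_geometric_of_lt_one hqr0.le hqr1).mul_left _
  have haeeq : ({x | infDist x E < (2:ℝ)⁻¹ ^ 0 * r} : Set (Fin n → ℝ)) \ E
      =ᵐ[volume] {x | infDist x E < (2:ℝ)⁻¹ ^ 0 * r} := by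
    apply sdiff_ae_eq_self.mpr
    exact measure_mono_null inter_subset_right hEnull
  have hK0 : ({x | infDist x E < r} : Set (Fin n → ℝ))
      = {x | infDist x E < (2:ℝ)⁻¹ ^ 0 * r} := by
    simp
  calc ∫⁻ x in {x | infDist x E < r}, ENNReal.ofReal (u x ^ p x * ϑ x)
      = ∫⁻ x in ({x | infDist x E < (2:ℝ)⁻¹ ^ 0 * r} : Set (Fin n → ℝ)) \ E,
        ENNReal.ofReal (u x ^ p x * ϑ x) := by
        rw [hK0]; exact (setLIntegral_congr haeeq).symm
    _ ≤ ∫⁻ x in ⋃ j : ℕ, ({x | infDist x E < (2:ℝ)⁻¹ ^ j * r} \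
        {x | infDist x E < (2:ℝ)⁻¹ ^ (j+1) * r}),
        ENNReal.ofReal (u x ^ p x * ϑ x) := lintegral_mono_set hcover
    _ ≤ ∑' j : ℕ, ∫⁻ x in {x | infDist x E < (2:ℝ)⁻¹ ^ j * r} \
        {x | infDist x E < (2:ℝ)⁻¹ ^ (j+1) * r},
        ENNReal.ofReal (u x ^ p x * ϑ x) := lintegral_iUnion_le _ _
    _ ≤ ∑' j : ℕ, ENNReal.ofReal (max C 1 ^ pp * 2 ^ pβp * ε * r ^ (pp+1) *
        ((2:ℝ)⁻¹ ^ (pp+1)) ^ j) := ENNReal.tsum_le_tsum key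
    _ = ENNReal.ofReal (∑' j : ℕ, max C 1 ^ pp * 2 ^ pβp * ε * r ^ (pp+1) *
        ((2:ℝ)⁻¹ ^ (pp+1)) ^ j) := (ENNReal.ofReal_tsum_of_nonneg hqnn hsum).symm
    _ = ENNReal.ofReal (max C 1 ^ pp * 2 ^ pβp * (1 - (2:ℝ)⁻¹ ^ (pp + 1))⁻¹ * ε *
        r ^ (pp + 1)) := by
        rw [tsum_mul_left, tsum_geometric_of_lt_one hqr0.le hqr1]
        congr 1
        ring
end

section
/- Let Ω ⊆ ℝⁿ be open, ϑ ∈ L¹_loc(Ω) a positive weight, τ : Ω → [0,n] measurable, and suppose there is a locally bounded function σ : Ω × Ω → (0,∞) such that ∫_{Q(y,ℓ)} ℓ^{−τ(x)} ϑ(x) dx ≤ σ(y,z) ∫_{Q(z,ℓ)} ℓ^{−τ(x)} ϑ(x) dx for all pairs of adjacent dyadic cubes Q(y,ℓ), Q(z,ℓ) ⊆ Ω of equal side length ℓ. Then for every compact K ⊆ Ω there is a constant C = C(n,σ,K) such that ∫_{(3/2)Q(y,ℓ)} ℓ^{−τ} dϑ ≤ C ∫_{Q(z,ℓ)} ℓ^{−τ}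 dϑ whenever y,z ∈ K, ℓ√n < d(K,∂Ω), and either y = z or Q(y,ℓ) and Q(z,ℓ) are adjacent dyadic cubes contained in Ω. -/
open MeasureTheory Set Metric
open scoped ENNReal

/-- The closed axis-parallel cube of center `c` and side length `ℓ`. -/
def cube {n : ℕ} (c : Fin n → ℝ) (ℓ : ℝ) : Set (Fin n → ℝ) :=
  {y | ∀ i, |c i - y i| ≤ ℓ / 2}

/-- `cube c ℓ` is a dyadic cube: `ℓ = 2^{-k}` and the center has coordinates
`(mᵢ + 1/2)·2^{-k}` for integers `mᵢ`. -/
def IsDyadicCube {n : ℕ} (c : Fin n → ℝ) (ℓ : ℝ) : Prop :=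
  ∃ (k : ℤ) (m : Fin n → ℤ), ℓ = 2 ^ (-k) ∧ ∀ i, c i = ((m i : ℝ) + 1 / 2) * ℓ

/-- Two distinct cubes of equal side length `ℓ` are adjacent if their closures intersect. -/
def AdjacentCubes {n : ℕ} (y z : Fin n → ℝ) (ℓ : ℝ) : Prop :=
  y ≠ z ∧ (cube y ℓ ∩ cube z ℓ).Nonempty

namespace Stmt8Aux

/-- center of the dyadic cube of side `s` with index vector `idx`. -/
noncomputable def halfCenter {n : ℕ} (s : ℝ) (idx : Fin n → ℤ) : Fin n → ℝ :=
  fun i => ((idx i : ℝ) + 1 / 2) * s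

lemma halfCenter_apply {n : ℕ} (s : ℝ) (idx : Fin n → ℤ) (i : Fin n) :
    halfCenter s idx i = ((idx i : ℝ) + 1 / 2) * s := rfl

lemma cube_eq_closedBall {n : ℕ} (c : Fin n → ℝ) {ℓ : ℝ} (hℓ : 0 ≤ ℓ) :
    cube c ℓ = Metric.closedBall c (ℓ / 2) := by
  ext q
  rw [Metric.mem_closedBall, dist_pi_le_iff (by linarith)]
  constructor
  · intro h i
    rw [Real.dist_eq, abs_sub_comm]
    exact h i
  · intro h i
    rw [abs_sub_comm, ← Real.dist_eq]
    exact h i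

lemma measurableSet_cube {n : ℕ} (c : Fin n → ℝ) {ℓ : ℝ} (hℓ : 0 ≤ ℓ) :
    MeasurableSet (cube c ℓ) := by
  rw [cube_eq_closedBall c hℓ]
  exact measurableSet_closedBall

lemma ofReal_mul_mono {a b t : ℝ} (ha : 0 ≤ a) (hab : a ≤ b) :
    ENNReal.ofReal (a * t) ≤ ENNReal.ofReal (b * t) := by
  rcases le_or_gt 0 t with ht | ht
  · exact ENNReal.ofReal_le_ofReal (mul_le_mul_of_nonneg_right hab ht)
  · rw [ENNReal.ofReal_of_nonpos (by nlinarith)]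
    exact zero_le

lemma ball_infDist_frontier_subset {n : ℕ} {Ω : Set (Fin n → ℝ)} (hΩ : IsOpen Ω)
    {x : Fin n → ℝ} (hx : x ∈ Ω) :
    Metric.ball x (infDist x (frontier Ω)) ⊆ Ω := by
  rcases le_or_gt (infDist x (frontier Ω)) 0 with h | h
  · rw [ball_eq_empty.mpr h]
    exact empty_subset _
  · have hpre : IsPreconnected (ball x (infDist x (frontier Ω))) :=
      (convex_ball x _).isPreconnected
    have hsub : ball x (infDist x (frontier Ω)) ⊆ Ω ∪ (closure Ω)ᶜ := by
      intro w hw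
      by_contra hcon
      rw [mem_union, not_or, notMem_compl_iff] at hcon
      have hwf : w ∈ frontier Ω := by
        rw [hΩ.frontier_eq]
        exact ⟨hcon.2, hcon.1⟩
      have h1 : infDist x (frontier Ω) ≤ dist x w := infDist_le_dist_of_mem hwf
      rw [mem_ball, dist_comm] at hw
      linarith
    exact hpre.subset_left_of_subset_union hΩ isClosed_closure.isOpen_compl
      (disjoint_compl_right.mono_left subset_closure) hsub ⟨x, mem_ball_self h, hx⟩

end Stmt8Aux

open Stmt8Aux

set_option maxHeartbeats 2000000 in
/-- from the comparison of `∫ ℓ^{-τ} dϑ` over adjacent dyadic cubes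
(with locally bounded constant `σ`) one gets, uniformly over a compact `K ⊆ Ω`,
`∫_{(3/2)Q(y,ℓ)} ℓ^{-τ} dϑ ≤ C ∫_{Q(z,ℓ)} ℓ^{-τ} dϑ` for `y = z` or adjacent cubes. -/
theorem stmt_8 {n : ℕ} (Ω : Set (Fin n → ℝ)) (hΩo : IsOpen Ω)
    (ϑ τ : (Fin n → ℝ) → ℝ)
    (hϑloc : LocallyIntegrableOn ϑ Ω) (hϑpos : ∀ᵐ x ∂(volume.restrict Ω), 0 < ϑ x)
    (hτm : Measurable τ) (hτ : ∀ x ∈ Ω, 0 ≤ τ x ∧ τ x ≤ n)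
    (σ : (Fin n → ℝ) × (Fin n → ℝ) → ℝ) (hσpos : ∀ w, 0 < σ w)
    (hσloc : ∀ w ∈ Ω ×ˢ Ω, ∃ U ∈ nhds w, ∃ M : ℝ, ∀ q ∈ U, σ q ≤ M)
    (hcomp : ∀ (y z : Fin n → ℝ) (ℓ : ℝ), IsDyadicCube y ℓ → IsDyadicCube z ℓ →
      AdjacentCubes y z ℓ → cube y ℓ ⊆ Ω → cube z ℓ ⊆ Ω →
      (∫⁻ x in cube y ℓ, ENNReal.ofReal (ℓ ^ (-(τ x)) * ϑ x))
        ≤ ENNReal.ofReal (σ (y, z)) * ∫⁻ x in cube z ℓ, ENNReal.ofReal (ℓ ^ (-(τ x)) * ϑ x))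
    (K : Set (Fin n → ℝ)) (hK : IsCompact K) (hKΩ : K ⊆ Ω) :
    ∃ C > (0:ℝ), ∀ (y z : Fin n → ℝ) (ℓ : ℝ), 0 < ℓ →
      y ∈ K → z ∈ K → (∀ x ∈ K, ℓ * Real.sqrt n < infDist x (frontier Ω)) →
      ((y = z ∧ IsDyadicCube y ℓ ∧ cube y ℓ ⊆ Ω) ∨
        (IsDyadicCube y ℓ ∧ IsDyadicCube z ℓ ∧ AdjacentCubes y z ℓ ∧
          cube y ℓ ⊆ Ω ∧ cube z ℓ ⊆ Ω)) →
      (∫⁻ x in cube y (3 * ℓ / 2), ENNReal.ofReal (ℓ ^ (-(τ x)) * ϑ x))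
        ≤ ENNReal.ofReal C * ∫⁻ x in cube z ℓ, ENNReal.ofReal (ℓ ^ (-(τ x)) * ϑ x) := by
  classical
  rcases Nat.eq_zero_or_pos n with hn0 | hn
  · subst hn0
    refine ⟨1, one_pos, ?_⟩
    intro y z ℓ hℓ hy hz hd hcase
    have h1 : ∀ (c : Fin 0 → ℝ) (t : ℝ), cube c t = univ := by
      intro c t; ext q; simp [cube]
    rw [h1, h1, ENNReal.ofReal_one, one_mul]
  rcases K.eq_empty_or_nonempty with hKe | hKne
  · exact ⟨1, one_pos, fun y z ℓ _ hy _ _ _ => absurd hy (by simp [hKe])⟩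
  obtain ⟨x₀, hx₀K, hx₀min⟩ :=
    hK.exists_isMinOn hKne (continuous_infDist_pt (frontier Ω)).continuousOn
  set r := infDist x₀ (frontier Ω) with hrdef
  have hx₀min' : ∀ x ∈ K, r ≤ infDist x (frontier Ω) := fun x hx => hx₀min hx
  have hsqn : (1:ℝ) ≤ Real.sqrt n := Real.one_le_sqrt.mpr (by exact_mod_cast hn)
  rcases le_or_gt r 0 with hr0 | hrpos
  · refine ⟨1, one_pos, ?_⟩
    intro y z ℓ hℓ hy hz hd hcase
    have h := hd x₀ hx₀K
    nlinarith
  set L := cthickening r K ∩ (closure Ω ∩ {x | r / 4 ≤ infDist x (frontier Ω)}) with hLdef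
  have hLcomp : IsCompact L :=
    hK.cthickening.inter_right
      (isClosed_closure.inter (isClosed_le continuous_const (continuous_infDist_pt _)))
  have hLΩ : L ⊆ Ω := by
    rintro x ⟨-, hxc, hxd⟩
    by_contra hxΩ
    have hxf : x ∈ frontier Ω := by
      rw [hΩo.frontier_eq]; exact ⟨hxc, hxΩ⟩
    have h0 : infDist x (frontier Ω) = 0 := infDist_zero_of_mem hxf
    rw [mem_setOf_eq, h0] at hxd
    linarith
  obtain ⟨M, hM1, hMb⟩ : ∃ M : ℝ, 1 ≤ M ∧ ∀ p ∈ L, ∀ q ∈ L, σ (p, q) ≤ M := by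
    choose U hU Mw hMw using hσloc
    have hLL : IsCompact (L ×ˢ L) := hLcomp.prod hLcomp
    have hsub : L ×ˢ L ⊆ Ω ×ˢ Ω := prod_mono hLΩ hLΩ
    obtain ⟨t, ht⟩ := hLL.elim_nhds_subcover' (fun w hw => U w (hsub hw))
      (fun w hw => hU w (hsub hw))
    set g : ↥(L ×ˢ L) → ℝ := fun w => max (Mw w (hsub w.2)) 0 with hg
    have hsnn : (0:ℝ) ≤ ∑ w ∈ t, g w :=
      Finset.sum_nonneg fun _ _ => le_max_right _ _
    refine ⟨1 + ∑ w ∈ t, g w, by linarith, ?_⟩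
    intro p hp q hq
    have hpq : (p, q) ∈ L ×ˢ L := ⟨hp, hq⟩
    have h2 := ht hpq
    simp only [mem_iUnion, exists_prop] at h2
    obtain ⟨w, hwt, hmem⟩ := h2
    calc σ (p, q) ≤ Mw w (hsub w.2) := hMw w (hsub w.2) (p, q) hmem
      _ ≤ g w := le_max_left _ _
      _ ≤ ∑ w ∈ t, g w :=
          Finset.single_le_sum (f := g) (fun _ _ => le_max_right _ _) hwt
      _ ≤ 1 + ∑ w ∈ t, g w := by linarith
  have hM0 : (0:ℝ) ≤ M := by linarith
  refine ⟨4 ^ n * 2 ^ n * M ^ (2 * n + 1), by positivity, ?_⟩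
  intro y z ℓ hℓ hy hz hd hcase
  have hyd : IsDyadicCube y ℓ := by
    rcases hcase with ⟨_, h, _⟩ | ⟨h, _⟩ <;> exact h
  have hyΩ : cube y ℓ ⊆ Ω := by
    rcases hcase with ⟨_, _, h⟩ | ⟨_, _, _, h, _⟩ <;> exact h
  obtain ⟨k, m, hℓk, hyc⟩ := hyd
  have hℓr : ℓ * Real.sqrt n < r := hd x₀ hx₀K
  have hℓr' : ℓ ≤ ℓ * Real.sqrt n := le_mul_of_one_le_right hℓ.le hsqn
  have hry : r ≤ infDist y (frontier Ω) := hx₀min' y hy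
  have hℓy : ℓ * Real.sqrt n < infDist y (frontier Ω) := hd y hy
  have hballΩ : ∀ x, dist x y ≤ ℓ → x ∈ Ω := by
    intro x hx
    apply ball_infDist_frontier_subset hΩo (hKΩ hy)
    rw [mem_ball]
    linarith
  set s : ℝ := ℓ / 2 with hsdef
  have hs : 0 < s := by rw [hsdef]; linarith
  -- geometric facts
  have hcyd : ∀ (idx : Fin n → ℤ), (∀ i, 2 * m i - 1 ≤ idx i ∧ idx i ≤ 2 * m i + 2) →
      ∀ i, |y i - halfCenter s idx i| ≤ 3 * ℓ / 4 := by
    intro idx hidx i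
    have h1 : ((2 * m i - 1 : ℤ) : ℝ) ≤ (idx i : ℝ) := by exact_mod_cast (hidx i).1
    have h2 : ((idx i : ℤ) : ℝ) ≤ ((2 * m i + 2 : ℤ) : ℝ) := by exact_mod_cast (hidx i).2
    push_cast at h1 h2
    rw [hyc i, halfCenter_apply, abs_le, hsdef]
    have h1' := mul_le_mul_of_nonneg_right h1 hℓ.le
    have h2' := mul_le_mul_of_nonneg_right h2 hℓ.le
    constructor <;> nlinarith
  have hcubesubΩ : ∀ (idx : Fin n → ℤ), (∀ i, 2 * m i - 1 ≤ idx i ∧ idx i ≤ 2 * m i + 2) →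
      cube (halfCenter s idx) s ⊆ Ω := by
    intro idx hidx q hq
    apply hballΩ
    rw [dist_pi_le_iff hℓ.le]
    intro i
    have h1 := hq i
    have h2 := hcyd idx hidx i
    rw [Real.dist_eq]
    rw [abs_le] at h1 h2 ⊢
    constructor <;> linarith
  have hselfmem : ∀ (c : Fin n → ℝ), c ∈ cube c s := by
    intro c i
    rw [sub_self, abs_zero]
    linarith
  have hccL : ∀ (idx : Fin n → ℤ), (∀ i, 2 * m i - 1 ≤ idx i ∧ idx i ≤ 2 * m i + 2) →
      halfCenter s idx ∈ L := by
    intro idx hidx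
    have hccΩ : halfCenter s idx ∈ Ω := hcubesubΩ idx hidx (hselfmem _)
    have hdistcy : dist (halfCenter s idx) y ≤ 3 * ℓ / 4 := by
      rw [dist_pi_le_iff (by linarith)]
      intro i
      rw [Real.dist_eq, abs_sub_comm]
      exact hcyd idx hidx i
    refine ⟨mem_cthickening_of_dist_le _ y r K hy (by linarith), subset_closure hccΩ, ?_⟩
    rw [mem_setOf_eq]
    have h3 : infDist y (frontier Ω) ≤ infDist (halfCenter s idx) (frontier Ω)
        + dist y (halfCenter s idx) := infDist_le_infDist_add_dist
    rw [dist_comm] at h3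
    linarith
  have hsd : s = (2:ℝ) ^ (-(k + 1) : ℤ) := by
    rw [hsdef, hℓk, neg_add, zpow_add₀ (by norm_num : (2:ℝ) ≠ 0)]
    norm_num
    ring
  have hdyad : ∀ idx : Fin n → ℤ, IsDyadicCube (halfCenter s idx) s :=
    fun idx => ⟨k + 1, idx, hsd, fun i => rfl⟩
  have hone : (1:ℝ≥0∞) ≤ ENNReal.ofReal M := ENNReal.one_le_ofReal.mpr hM1
  -- single comparison step between adjacent half-cubes
  have hstep : ∀ (idx : Fin n → ℤ) (i : Fin n) (δ : ℤ), (δ = 1 ∨ δ = -1) →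
      (∀ j, 2 * m j - 1 ≤ idx j ∧ idx j ≤ 2 * m j + 2) →
      (∀ j, 2 * m j - 1 ≤ Function.update idx i (idx i + δ) j ∧
        Function.update idx i (idx i + δ) j ≤ 2 * m j + 2) →
      (∫⁻ x in cube (halfCenter s idx) s, ENNReal.ofReal (s ^ (-(τ x)) * ϑ x))
        ≤ ENNReal.ofReal M *
          ∫⁻ x in cube (halfCenter s (Function.update idx i (idx i + δ))) s,
            ENNReal.ofReal (s ^ (-(τ x)) * ϑ x) := by
    intro idx i δ hδ hidx hidx'
    have hne : halfCenter s idx ≠ halfCenter s (Function.update idx i (idx i + δ)) := by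
      intro hcontra
      have h := congrFun hcontra i
      rw [halfCenter_apply, halfCenter_apply, Function.update_self] at h
      push_cast at h
      rcases hδ with rfl | rfl <;> push_cast at h <;> nlinarith
    have hw : (cube (halfCenter s idx) s ∩
        cube (halfCenter s (Function.update idx i (idx i + δ))) s).Nonempty := by
      refine ⟨Function.update (halfCenter s idx) i
        (((idx i : ℝ) + 1 / 2 + (δ : ℝ) / 2) * s), ?_, ?_⟩
      · intro j
        rcases eq_or_ne j i with rfl | hj
        · rw [Function.update_self, halfCenter_apply]
          have hcalc : ((idx j : ℝ) + 1 / 2) * s - ((idx j : ℝ) + 1 / 2 + (δ : ℝ) / 2) * s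
              = -((δ : ℝ) / 2 * s) := by ring
          rw [hcalc, abs_neg]
          rcases hδ with rfl | rfl
          · push_cast
            rw [abs_of_nonneg (by linarith)]
            linarith
          · push_cast
            rw [abs_of_nonpos (by linarith)]
            linarith
        · rw [Function.update_of_ne hj, sub_self, abs_zero]
          linarith
      · intro j
        rcases eq_or_ne j i with rfl | hj
        · rw [Function.update_self, halfCenter_apply, Function.update_self]
          have hcalc : (((idx j + δ : ℤ) : ℝ) + 1 / 2) * s
              - ((idx j : ℝ) + 1 / 2 + (δ : ℝ) / 2) * s = (δ : ℝ) / 2 * s := by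
            push_cast
            ring
          rw [hcalc]
          rcases hδ with rfl | rfl
          · push_cast
            rw [abs_of_nonneg (by linarith)]
            linarith
          · push_cast
            rw [abs_of_nonpos (by linarith)]
            linarith
        · rw [Function.update_of_ne hj, halfCenter_apply, halfCenter_apply,
            Function.update_of_ne hj, sub_self, abs_zero]
          linarith
    have hadj : AdjacentCubes (halfCenter s idx)
        (halfCenter s (Function.update idx i (idx i + δ))) s := ⟨hne, hw⟩
    have hcs := hcomp (halfCenter s idx) (halfCenter s (Function.update idx i (idx i + δ))) s
      (hdyad idx) (hdyad _) hadj (hcubesubΩ idx hidx) (hcubesubΩ _ hidx')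
    exact hcs.trans (mul_le_mul_left (ENNReal.ofReal_le_ofReal
      (hMb _ (hccL idx hidx) _ (hccL _ hidx'))) _)
  -- chain of comparisons, by induction on the number of steps
  have key : ∀ (N : ℕ) (idx : Fin n → ℤ),
      (∀ j, 2 * m j - 1 ≤ idx j ∧ idx j ≤ 2 * m j + 2) →
      (∑ j, (idx j - 2 * m j).natAbs) ≤ N →
      (∫⁻ x in cube (halfCenter s idx) s, ENNReal.ofReal (s ^ (-(τ x)) * ϑ x))
        ≤ ENNReal.ofReal M ^ N *
          ∫⁻ x in cube (halfCenter s (fun j => 2 * m j)) s,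
            ENNReal.ofReal (s ^ (-(τ x)) * ϑ x) := by
    intro N
    induction N with
    | zero =>
      intro idx hidx hsum
      have hidx0 : idx = fun j => 2 * m j := by
        funext j
        have h0 : (idx j - 2 * m j).natAbs = 0 :=
          Finset.sum_eq_zero_iff.mp (Nat.le_zero.mp hsum) j (Finset.mem_univ j)
        omega
      rw [hidx0, pow_zero, one_mul]
    | succ N ih =>
      intro idx hidx hsum
      by_cases heq : idx = fun j => 2 * m j
      · rw [heq]
        refine le_mul_of_one_le_left zero_le ?_
        exact one_le_pow_of_one_le' hone (N + 1)
      · have hex : ∃ i, idx i ≠ 2 * m i := by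
          by_contra hcon
          push_neg at hcon
          exact heq (funext hcon)
        obtain ⟨i, hi⟩ := hex
        set δ : ℤ := if 2 * m i < idx i then -1 else 1 with hδdef
        have hδ : δ = 1 ∨ δ = -1 := by
          rw [hδdef]
          split <;> simp
        have hidx' : ∀ j, 2 * m j - 1 ≤ Function.update idx i (idx i + δ) j ∧
            Function.update idx i (idx i + δ) j ≤ 2 * m j + 2 := by
          intro j
          rcases eq_or_ne j i with rfl | hj
          · rw [Function.update_self, hδdef]
            have := hidx j
            split <;> omega
          · rw [Function.update_of_ne hj]
            exact hidx j
        have hsum' : (∑ j, (Function.update idx i (idx i + δ) j - 2 * m j).natAbs) ≤ N := by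
          have hround : ∀ j ∈ Finset.univ.erase i,
              (Function.update idx i (idx i + δ) j - 2 * m j).natAbs
                = (idx j - 2 * m j).natAbs := by
            intro j hj
            rw [Function.update_of_ne (Finset.ne_of_mem_erase hj)]
          have e1 := Finset.add_sum_erase Finset.univ
            (fun j => (Function.update idx i (idx i + δ) j - 2 * m j).natAbs) (Finset.mem_univ i)
          have e2 := Finset.add_sum_erase Finset.univ
            (fun j => (idx j - 2 * m j).natAbs) (Finset.mem_univ i)
          rw [Finset.sum_congr rfl hround] at e1
          have hdec : (Function.update idx i (idx i + δ) i - 2 * m i).natAbs + 1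
              = (idx i - 2 * m i).natAbs := by
            rw [Function.update_self, hδdef]
            split <;> omega
          omega
        calc (∫⁻ x in cube (halfCenter s idx) s, ENNReal.ofReal (s ^ (-(τ x)) * ϑ x))
            ≤ ENNReal.ofReal M *
              ∫⁻ x in cube (halfCenter s (Function.update idx i (idx i + δ))) s,
                ENNReal.ofReal (s ^ (-(τ x)) * ϑ x) := hstep idx i δ hδ hidx hidx'
          _ ≤ ENNReal.ofReal M * (ENNReal.ofReal M ^ N *
                ∫⁻ x in cube (halfCenter s (fun j => 2 * m j)) s,
                  ENNReal.ofReal (s ^ (-(τ x)) * ϑ x)) :=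
              mul_le_mul_right (ih _ hidx' hsum') _
          _ = ENNReal.ofReal M ^ (N + 1) *
                ∫⁻ x in cube (halfCenter s (fun j => 2 * m j)) s,
                  ENNReal.ofReal (s ^ (-(τ x)) * ϑ x) := by ring
  -- covering of the dilated cube by 4^n half-cubes
  have hcover : cube y (3 * ℓ / 2) ⊆
      ⋃ e : Fin n → Fin 4, cube (halfCenter s (fun i => 2 * m i - 1 + ((e i : ℕ) : ℤ))) s := by
    intro q hq
    have hJb : ∀ i, 2 * m i - 1 ≤ ⌊2 * q i / ℓ⌋ ∧ ⌊2 * q i / ℓ⌋ ≤ 2 * m i + 2 := by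
      intro i
      have hqi := hq i
      rw [hyc i, abs_le] at hqi
      constructor
      · rw [Int.le_floor, le_div_iff₀ hℓ]
        push_cast
        nlinarith
      · have hlt : (2:ℝ) * q i / ℓ < ((2 * m i + 3 : ℤ) : ℝ) := by
          rw [div_lt_iff₀ hℓ]
          push_cast
          nlinarith
        have h2 := Int.floor_lt.mpr hlt
        omega
    have hex : ∀ i, ∃ ei : Fin 4, (⌊2 * q i / ℓ⌋ : ℤ) = 2 * m i - 1 + ((ei : ℕ) : ℤ) := by
      intro i
      have h := hJb i
      refine ⟨⟨(⌊2 * q i / ℓ⌋ - (2 * m i - 1)).toNat, by omega⟩, ?_⟩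
      simp only [Fin.val_mk]
      omega
    choose e he using hex
    refine mem_iUnion.mpr ⟨e, ?_⟩
    intro i
    show |(((2 * m i - 1 + ((e i : ℕ) : ℤ) : ℤ) : ℝ) + 1 / 2) * s - q i| ≤ s / 2
    have hcast : ((2 * m i - 1 + ((e i : ℕ) : ℤ) : ℤ) : ℝ) = ((⌊2 * q i / ℓ⌋ : ℤ) : ℝ) := by
      exact_mod_cast congrArg (fun t : ℤ => (t : ℝ)) (he i).symm
    rw [hcast]
    have hJlo : ((⌊2 * q i / ℓ⌋ : ℤ) : ℝ) ≤ 2 * q i / ℓ := Int.floor_le _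
    have hJhi : 2 * q i / ℓ < (⌊2 * q i / ℓ⌋ : ℝ) + 1 := Int.lt_floor_add_one _
    have h1 : ((⌊2 * q i / ℓ⌋ : ℤ) : ℝ) * ℓ ≤ 2 * q i := (le_div_iff₀ hℓ).mp hJlo
    have h2 : 2 * q i < ((⌊2 * q i / ℓ⌋ : ℝ) + 1) * ℓ := (div_lt_iff₀ hℓ).mp hJhi
    rw [abs_le, hsdef]
    constructor <;> nlinarith
  -- weight comparison: fixed integrand ℓ^(-τ) vs the half-scale integrand
  have hw1 : ∀ (c : Fin n → ℝ), cube c s ⊆ Ω →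
      (∫⁻ x in cube c s, ENNReal.ofReal (ℓ ^ (-(τ x)) * ϑ x))
        ≤ ∫⁻ x in cube c s, ENNReal.ofReal (s ^ (-(τ x)) * ϑ x) := by
    intro c hc
    refine lintegral_mono_ae (((ae_restrict_iff' (measurableSet_cube c hs.le)).mpr
      (ae_of_all _ ?_)))
    intro x hx
    refine ofReal_mul_mono (Real.rpow_nonneg hℓ.le _) ?_
    exact Real.rpow_le_rpow_of_nonpos hs (by rw [hsdef]; linarith)
      (neg_nonpos.mpr (hτ x (hc hx)).1)
  have hw2 : ∀ (c : Fin n → ℝ), cube c s ⊆ Ω →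
      (∫⁻ x in cube c s, ENNReal.ofReal (s ^ (-(τ x)) * ϑ x))
        ≤ ENNReal.ofReal ((2:ℝ) ^ n) *
          ∫⁻ x in cube c s, ENNReal.ofReal (ℓ ^ (-(τ x)) * ϑ x) := by
    intro c hc
    have hpt : ∀ x ∈ cube c s, ENNReal.ofReal (s ^ (-(τ x)) * ϑ x)
        ≤ ENNReal.ofReal ((2:ℝ) ^ n * (ℓ ^ (-(τ x)) * ϑ x)) := by
      intro x hx
      rw [← mul_assoc]
      refine ofReal_mul_mono (Real.rpow_nonneg hs.le _) ?_
      have hτx := hτ x (hc hx)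
      have hsval : s ^ (-(τ x)) = ℓ ^ (-(τ x)) * (2:ℝ) ^ (τ x) := by
        rw [hsdef, Real.div_rpow hℓ.le (by norm_num : (0:ℝ) ≤ 2),
          Real.rpow_neg (by norm_num : (0:ℝ) ≤ 2) (τ x), div_inv_eq_mul]
      calc s ^ (-(τ x)) = ℓ ^ (-(τ x)) * (2:ℝ) ^ (τ x) := hsval
        _ ≤ ℓ ^ (-(τ x)) * (2:ℝ) ^ ((n : ℝ)) :=
            mul_le_mul_of_nonneg_left
              (Real.rpow_le_rpow_of_exponent_le one_le_two hτx.2)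
              (Real.rpow_nonneg hℓ.le _)
        _ = (2:ℝ) ^ n * ℓ ^ (-(τ x)) := by
            rw [Real.rpow_natCast]
            ring
    calc (∫⁻ x in cube c s, ENNReal.ofReal (s ^ (-(τ x)) * ϑ x))
        ≤ ∫⁻ x in cube c s, ENNReal.ofReal ((2:ℝ) ^ n * (ℓ ^ (-(τ x)) * ϑ x)) :=
          lintegral_mono_ae (((ae_restrict_iff' (measurableSet_cube c hs.le)).mpr
            (ae_of_all _ hpt)))
      _ = ∫⁻ x in cube c s, ENNReal.ofReal ((2:ℝ) ^ n) * ENNReal.ofReal (ℓ ^ (-(τ x)) * ϑ x) := by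
          simp_rw [ENNReal.ofReal_mul (by positivity : (0:ℝ) ≤ (2:ℝ) ^ n)]
      _ = ENNReal.ofReal ((2:ℝ) ^ n) * ∫⁻ x in cube c s, ENNReal.ofReal (ℓ ^ (-(τ x)) * ϑ x) :=
          lintegral_const_mul' _ _ ENNReal.ofReal_ne_top
  have hInRa : ∀ j, 2 * m j - 1 ≤ (fun j => 2 * m j) j ∧ (fun j => 2 * m j) j ≤ 2 * m j + 2 := by
    intro j
    simp only []
    omega
  have hsubQa : cube (halfCenter s (fun j => 2 * m j)) s ⊆ cube y ℓ := by
    intro q hq i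
    have h1 := hq i
    rw [halfCenter_apply] at h1
    rw [hyc i]
    push_cast at h1
    rw [abs_le] at h1 ⊢
    rw [hsdef] at h1
    constructor <;> nlinarith
  have hzint : (∫⁻ x in cube y ℓ, ENNReal.ofReal (ℓ ^ (-(τ x)) * ϑ x))
      ≤ ENNReal.ofReal M * ∫⁻ x in cube z ℓ, ENNReal.ofReal (ℓ ^ (-(τ x)) * ϑ x) := by
    have hyL : y ∈ L := ⟨self_subset_cthickening K hy, subset_closure (hKΩ hy), by
      rw [mem_setOf_eq]
      linarith⟩
    rcases hcase with ⟨hyz, _, _⟩ | ⟨hyd2, hzd, hadj, hyΩ2, hzΩ⟩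
    · rw [← hyz]
      exact le_mul_of_one_le_left zero_le hone
    · have hzL : z ∈ L := ⟨self_subset_cthickening K hz, subset_closure (hKΩ hz), by
        rw [mem_setOf_eq]
        linarith [hx₀min' z hz]⟩
      exact (hcomp y z ℓ hyd2 hzd hadj hyΩ2 hzΩ).trans
        (mul_le_mul_left (ENNReal.ofReal_le_ofReal (hMb y hyL z hzL)) _)
  have hmain : ∀ e : Fin n → Fin 4,
      (∫⁻ x in cube (halfCenter s (fun i => 2 * m i - 1 + ((e i : ℕ) : ℤ))) s,
        ENNReal.ofReal (ℓ ^ (-(τ x)) * ϑ x))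
        ≤ ENNReal.ofReal M ^ (2 * n) * (ENNReal.ofReal ((2:ℝ) ^ n)
            * (ENNReal.ofReal M * ∫⁻ x in cube z ℓ, ENNReal.ofReal (ℓ ^ (-(τ x)) * ϑ x))) := by
    intro e
    have hInRe : ∀ j, 2 * m j - 1 ≤ 2 * m j - 1 + ((e j : ℕ) : ℤ) ∧
        2 * m j - 1 + ((e j : ℕ) : ℤ) ≤ 2 * m j + 2 := by
      intro j
      have := (e j).isLt
      omega
    have hsum2 : (∑ j, ((2 * m j - 1 + ((e j : ℕ) : ℤ)) - 2 * m j).natAbs) ≤ 2 * n := by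
      calc (∑ j, ((2 * m j - 1 + ((e j : ℕ) : ℤ)) - 2 * m j).natAbs)
          ≤ ∑ _j : Fin n, 2 := Finset.sum_le_sum (fun j _ => by
            have := (e j).isLt
            omega)
        _ = 2 * n := by
            simp [Finset.sum_const, Finset.card_univ, mul_comm]
    calc (∫⁻ x in cube (halfCenter s (fun i => 2 * m i - 1 + ((e i : ℕ) : ℤ))) s,
            ENNReal.ofReal (ℓ ^ (-(τ x)) * ϑ x))
        ≤ ∫⁻ x in cube (halfCenter s (fun i => 2 * m i - 1 + ((e i : ℕ) : ℤ))) s,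
            ENNReal.ofReal (s ^ (-(τ x)) * ϑ x) := hw1 _ (hcubesubΩ _ hInRe)
      _ ≤ ENNReal.ofReal M ^ (2 * n) * ∫⁻ x in cube (halfCenter s (fun j => 2 * m j)) s,
            ENNReal.ofReal (s ^ (-(τ x)) * ϑ x) := key (2 * n) _ hInRe hsum2
      _ ≤ ENNReal.ofReal M ^ (2 * n) * (ENNReal.ofReal ((2:ℝ) ^ n)
            * ∫⁻ x in cube (halfCenter s (fun j => 2 * m j)) s,
              ENNReal.ofReal (ℓ ^ (-(τ x)) * ϑ x)) :=
          mul_le_mul_right (hw2 _ (hcubesubΩ _ hInRa)) _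
      _ ≤ ENNReal.ofReal M ^ (2 * n) * (ENNReal.ofReal ((2:ℝ) ^ n)
            * ∫⁻ x in cube y ℓ, ENNReal.ofReal (ℓ ^ (-(τ x)) * ϑ x)) :=
          mul_le_mul_right (mul_le_mul_right (lintegral_mono_set hsubQa) _) _
      _ ≤ _ := mul_le_mul_right (mul_le_mul_right hzint _) _
  have hconst : ENNReal.ofReal (4 ^ n * 2 ^ n * M ^ (2 * n + 1))
      = (4:ℝ≥0∞) ^ n * (ENNReal.ofReal M ^ (2 * n) * (ENNReal.ofReal ((2:ℝ) ^ n)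
          * ENNReal.ofReal M)) := by
    rw [ENNReal.ofReal_mul (by positivity : (0:ℝ) ≤ 4 ^ n * 2 ^ n),
        ENNReal.ofReal_mul (by positivity : (0:ℝ) ≤ (4:ℝ) ^ n),
        ENNReal.ofReal_pow (by norm_num : (0:ℝ) ≤ 4),
        ENNReal.ofReal_pow hM0, pow_succ]
    norm_num [ENNReal.ofReal_ofNat]
    ring
  calc (∫⁻ x in cube y (3 * ℓ / 2), ENNReal.ofReal (ℓ ^ (-(τ x)) * ϑ x))
      ≤ ∫⁻ x in ⋃ e : Fin n → Fin 4,
          cube (halfCenter s (fun i => 2 * m i - 1 + ((e i : ℕ) : ℤ))) s,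
          ENNReal.ofReal (ℓ ^ (-(τ x)) * ϑ x) := lintegral_mono_set hcover
    _ ≤ ∑' e : Fin n → Fin 4, ∫⁻ x in
          cube (halfCenter s (fun i => 2 * m i - 1 + ((e i : ℕ) : ℤ))) s,
          ENNReal.ofReal (ℓ ^ (-(τ x)) * ϑ x) := lintegral_iUnion_le _ _
    _ = ∑ e : Fin n → Fin 4, ∫⁻ x in
          cube (halfCenter s (fun i => 2 * m i - 1 + ((e i : ℕ) : ℤ))) s,
          ENNReal.ofReal (ℓ ^ (-(τ x)) * ϑ x) := tsum_fintype _
    _ ≤ ∑ _e : Fin n → Fin 4, ENNReal.ofReal M ^ (2 * n) * (ENNReal.ofReal ((2:ℝ) ^ n)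
          * (ENNReal.ofReal M * ∫⁻ x in cube z ℓ, ENNReal.ofReal (ℓ ^ (-(τ x)) * ϑ x))) :=
        Finset.sum_le_sum (fun e _ => hmain e)
    _ = (4:ℝ≥0∞) ^ n * (ENNReal.ofReal M ^ (2 * n) * (ENNReal.ofReal ((2:ℝ) ^ n)
          * (ENNReal.ofReal M * ∫⁻ x in cube z ℓ, ENNReal.ofReal (ℓ ^ (-(τ x)) * ϑ x)))) := by
        rw [Finset.sum_const, Finset.card_univ, Fintype.card_fun, Fintype.card_fin,
          Fintype.card_fin, nsmul_eq_mul, Nat.cast_pow, Nat.cast_ofNat]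
    _ = ENNReal.ofReal (4 ^ n * 2 ^ n * M ^ (2 * n + 1)) *
          ∫⁻ x in cube z ℓ, ENNReal.ofReal (ℓ ^ (-(τ x)) * ϑ x) := by
        rw [hconst]
        ring
end
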